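/- Let (p̲^A_i, p̄^A_i)_{i=1}^n be a good coherent probability interval on E_A = {a_1,…,a_n} with associated standard good mass m_A, and for each i = 1,…,n let numbers p̲^i_j, p̄^i_j ∈ [0,1] with p̲^i_j ≤ p̄^i_j be given (j fixed). Define p̄^B_j = 1 − Σ_{V ⊆ E_A} m_A(V) ∏_{i : a_i ∈ V} (1 − p̄^i_j). Then p̄^B_j ≥ max Σ_{i=1}^n y_i x_i, where the maximum is over all x_i ∈ [p̲^A_i, p̄^A_i] with Σ_{i=1}^n x_i = 1 and all y_i ∈ [p̲^i_j, p̄^i_j]. -/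
import Mathlib


open Finset

/-- A Dempster–Shafer mass function on the finite type `α`:
nonnegative, at most one, vanishing on `∅`, and summing to one. -/
def IsMass {α : Type*} [Fintype α] [DecidableEq α] (m : Finset α → ℝ) : Prop :=
  m ∅ = 0 ∧ (∀ V : Finset α, 0 ≤ m V ∧ m V ≤ 1) ∧ (∑ V : Finset α, m V) = 1

/-- The belief function associated to a mass function: `Bel m W = ∑_{V ⊆ W} m V`. -/
def Bel {α : Type*} [Fintype α] [DecidableEq α] (m : Finset α → ℝ) (W : Finset α) : ℝ :=
  ∑ V ∈ Finset.univ.filter (fun V : Finset α => V ⊆ W), m V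

/-- The plausibility function associated to a mass function:
`Pl m W = ∑_{V ∩ W ≠ ∅} m V`. -/
def Pl {α : Type*} [Fintype α] [DecidableEq α] (m : Finset α → ℝ) (W : Finset α) : ℝ :=
  ∑ V ∈ Finset.univ.filter (fun V : Finset α => (V ∩ W).Nonempty), m V

/-- A coherent probability interval `(lo i, hi i)_{i}` on `Fin n`:
componentwise bounds `0 ≤ lo ≤ hi ≤ 1`, together with [Coh1], [Coh2], [Coh3]. -/
def IsCoherent {n : ℕ} (lo hi : Fin n → ℝ) : Prop :=
  (∀ i, 0 ≤ lo i ∧ lo i ≤ hi i ∧ hi i ≤ 1) ∧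
  (∑ i, lo i) ≤ 1 ∧ 1 ≤ (∑ i, hi i) ∧
  (∀ i, 1 - ∑ h ∈ Finset.univ.erase i, hi h ≤ lo i) ∧
  (∀ i, hi i ≤ 1 - ∑ h ∈ Finset.univ.erase i, lo h)

/-- `Δ = S̄ + (n-2)S̲ - (n-1)` for a probability interval. -/
def intervalDelta {n : ℕ} (lo hi : Fin n → ℝ) : ℝ :=
  (∑ i, hi i) + ((n : ℝ) - 2) * (∑ i, lo i) - ((n : ℝ) - 1)

/-- A *good* coherent probability interval: coherent and `Δ ≥ 0`. -/
def IsGood {n : ℕ} (lo hi : Fin n → ℝ) : Prop :=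
  IsCoherent lo hi ∧ 0 ≤ intervalDelta lo hi

/-- The standard good mass (SGM) associated to a (good coherent) probability interval:
mass `lo i` on each singleton `{a_i}`, mass `1 - hi i - ∑_{h ≠ i} lo h` on each
complement `univ ∖ {a_i}`, mass `Δ` on `univ`, and `0` on every other set. -/
def SGM {n : ℕ} (lo hi : Fin n → ℝ) (V : Finset (Fin n)) : ℝ :=
  (∑ i ∈ Finset.univ.filter (fun i : Fin n => V = {i}), lo i)
  + (∑ i ∈ Finset.univ.filter (fun i : Fin n => V = Finset.univ \ {i}),
      (1 - hi i - ∑ h ∈ Finset.univ.erase i, lo h))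
  + (if V = Finset.univ then intervalDelta lo hi else 0)

lemma SGM_sum_mul {n : ℕ} (loA hiA : Fin n → ℝ) (g : Finset (Fin n) → ℝ) :
    ∑ V : Finset (Fin n), SGM loA hiA V * g V
      = (∑ i, loA i * g {i})
        + (∑ k, (1 - hiA k - ∑ h ∈ Finset.univ.erase k, loA h) * g (Finset.univ \ {k}))
        + intervalDelta loA hiA * g Finset.univ := by
  unfold SGM
  simp only [add_mul, Finset.sum_add_distrib, Finset.sum_mul, ite_mul, zero_mul,
    Finset.sum_filter]
  congr 1
  · congr 1
    · rw [Finset.sum_comm]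
      simp [Finset.sum_ite_eq']
    · rw [Finset.sum_comm]
      simp [Finset.sum_ite_eq']
  · simp [Finset.sum_ite_eq']


/-- Let `(loA, hiA)` be a good coherent probability interval on
`E_A = Fin n` with standard good mass `mA = SGM loA hiA`, and for a fixed `j` let
`lo i ≤ hi i` in `[0,1]` be conditional bounds. Then
`p̄ᴮⱼ = 1 - ∑_{V ⊆ E_A} mA(V) ∏_{i ∈ V} (1 - hi i)` is above `∑ᵢ yᵢ xᵢ` for every
choice of `xᵢ ∈ [loA i, hiA i]` with `∑ᵢ xᵢ = 1` and `yᵢ ∈ [lo i, hi i]`; that is,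
it is an upper bound on the credal maximum. -/
theorem sgm_upper_is_credal_upper_bound (n : ℕ) (loA hiA : Fin n → ℝ)
    (hA : IsGood loA hiA)
    (lo hi : Fin n → ℝ) (hbd : ∀ i, 0 ≤ lo i ∧ lo i ≤ hi i ∧ hi i ≤ 1)
    (x : Fin n → ℝ) (hx : ∀ i, loA i ≤ x i ∧ x i ≤ hiA i) (hxs : (∑ i, x i) = 1)
    (y : Fin n → ℝ) (hy : ∀ i, lo i ≤ y i ∧ y i ≤ hi i) :
    ∑ i, y i * x i ≤ 1 - ∑ V : Finset (Fin n), SGM loA hiA V * ∏ i ∈ V, (1 - hi i) := by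
  classical
  rcases Nat.eq_zero_or_pos n with rfl | hnpos
  · simp only [Finset.univ_eq_empty, Finset.sum_empty] at hxs
    norm_num at hxs
  obtain ⟨hcoh, hΔ⟩ := hA
  obtain ⟨hbdA, hS1, hS2, hcoh2, hcoh3⟩ := hcoh
  set P : Finset (Fin n) → ℝ := fun V => ∏ i ∈ V, (1 - hi i) with hPdef
  -- basic facts about P
  have hP0 : ∀ V, 0 ≤ P V := fun V =>
    Finset.prod_nonneg fun i _ => by linarith [(hbd i).2.2]
  have hP1 : ∀ V, P V ≤ 1 := fun V =>
    Finset.prod_le_one (fun i _ => by linarith [(hbd i).2.2])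
      (fun i _ => by linarith [(hbd i).1, (hbd i).2.1])
  have hPle : ∀ (V : Finset (Fin n)) (i : Fin n), i ∈ V → hi i ≤ 1 - P V := by
    intro V i hiV
    have h1 : P V = (1 - hi i) * ∏ j ∈ V.erase i, (1 - hi j) :=
      (Finset.mul_prod_erase V _ hiV).symm
    have h2 : (0:ℝ) ≤ ∏ j ∈ V.erase i, (1 - hi j) :=
      Finset.prod_nonneg fun j _ => by linarith [(hbd j).2.2]
    have h3 : ∏ j ∈ V.erase i, (1 - hi j) ≤ 1 :=
      Finset.prod_le_one (fun j _ => by linarith [(hbd j).2.2])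
        (fun j _ => by linarith [(hbd j).1, (hbd j).2.1])
    have h4 : (0:ℝ) ≤ 1 - hi i := by linarith [(hbd i).2.2]
    nlinarith
  set c : Fin n → ℝ := fun k => 1 - hiA k - ∑ h ∈ Finset.univ.erase k, loA h with hcdef
  have hc0 : ∀ k, 0 ≤ c k := fun k => by
    have := hcoh3 k; simp only [hcdef]; linarith
  set Δ : ℝ := intervalDelta loA hiA with hΔdef
  set SL : ℝ := ∑ i, loA i with hSL
  -- ∑ c + Δ = 1 - SL
  have hsumc : (∑ k, c k) + Δ = 1 - SL := by
    have h1 : ∀ k : Fin n, c k = 1 - hiA k - (SL - loA k) := fun k => by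
      simp only [hcdef, Finset.sum_erase_eq_sub (Finset.mem_univ k), hSL]
    rw [Finset.sum_congr rfl fun k _ => h1 k]
    simp only [Finset.sum_sub_distrib, Finset.sum_const, Finset.card_univ,
      Fintype.card_fin, nsmul_eq_mul, mul_one, hΔdef, intervalDelta, hSL]
    ring
  -- rewrite RHS
  rw [SGM_sum_mul loA hiA P]
  -- choose max index
  obtain ⟨i₁, -, hmax⟩ := Finset.exists_max_image Finset.univ hi
    ⟨⟨0, hnpos⟩, Finset.mem_univ _⟩
  set M1 : ℝ := hi i₁ with hM1
  set M2 : ℝ := (insert (0:ℝ) ((Finset.univ.erase i₁).image hi)).max'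
    ⟨0, Finset.mem_insert_self _ _⟩ with hM2
  have hM2_ge0 : 0 ≤ M2 := Finset.le_max' _ 0 (Finset.mem_insert_self _ _)
  have hM2_ge : ∀ i ∈ Finset.univ.erase i₁, hi i ≤ M2 := fun i hi' =>
    Finset.le_max' _ _ (Finset.mem_insert_of_mem (Finset.mem_image_of_mem _ hi'))
  have hM1_0 : 0 ≤ M1 := le_trans (hbd i₁).1 (hbd i₁).2.1
  have hM21 : M2 ≤ M1 := by
    apply Finset.max'_le
    intro z hz
    rcases Finset.mem_insert.1 hz with rfl | hz
    · exact hM1_0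
    · obtain ⟨i, hi', rfl⟩ := Finset.mem_image.1 hz
      exact hmax i (Finset.mem_univ i)
  -- t bounds
  have ht0 : ∀ i, 0 ≤ x i - loA i := fun i => by linarith [(hx i).1]
  have hts : ∑ i, (x i - loA i) = 1 - SL := by
    simp [Finset.sum_sub_distrib, hxs, hSL]
  -- core inequality
  have core : ∑ i, hi i * (x i - loA i)
      ≤ (∑ k, c k * (1 - P (Finset.univ \ {k}))) + Δ * (1 - P Finset.univ) := by
    set t : Fin n → ℝ := fun i => x i - loA i with htdef
    set T : ℝ := 1 - SL with hT
    have hsplitL : ∑ i, hi i * t i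
        = hi i₁ * t i₁ + ∑ i ∈ Finset.univ.erase i₁, hi i * t i :=
      (Finset.add_sum_erase _ _ (Finset.mem_univ i₁)).symm
    have htrest : ∑ i ∈ Finset.univ.erase i₁, t i = T - t i₁ := by
      rw [Finset.sum_erase_eq_sub (Finset.mem_univ i₁)]
      rw [hts]
    have hL2 : ∑ i ∈ Finset.univ.erase i₁, hi i * t i ≤ M2 * (T - t i₁) := by
      calc ∑ i ∈ Finset.univ.erase i₁, hi i * t i
          ≤ ∑ i ∈ Finset.univ.erase i₁, M2 * t i := by
            apply Finset.sum_le_sum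
            intro i hi'
            exact mul_le_mul_of_nonneg_right (hM2_ge i hi') (ht0 i)
        _ = M2 * (T - t i₁) := by rw [← Finset.mul_sum, htrest]
    -- right side lower bound
    have hsplitR : ∑ k, c k * (1 - P (Finset.univ \ {k}))
        = c i₁ * (1 - P (Finset.univ \ {i₁}))
          + ∑ k ∈ Finset.univ.erase i₁, c k * (1 - P (Finset.univ \ {k})) :=
      (Finset.add_sum_erase _ _ (Finset.mem_univ i₁)).symm
    have hf1 : M2 ≤ 1 - P (Finset.univ \ {i₁}) := by
      apply Finset.max'_le
      intro z hz
      rcases Finset.mem_insert.1 hz with rfl | hz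
      · linarith [hP1 (Finset.univ \ {i₁})]
      · obtain ⟨i, hi', rfl⟩ := Finset.mem_image.1 hz
        apply hPle
        simp only [Finset.mem_sdiff, Finset.mem_univ, true_and, Finset.mem_singleton]
        exact Finset.ne_of_mem_erase hi'
    have hfk : ∀ k ∈ Finset.univ.erase i₁, M1 ≤ 1 - P (Finset.univ \ {k}) := by
      intro k hk
      apply hPle
      simp only [Finset.mem_sdiff, Finset.mem_univ, true_and, Finset.mem_singleton]
      exact fun h => (Finset.ne_of_mem_erase hk) h.symm
    have hfu : M1 ≤ 1 - P Finset.univ := hPle _ _ (Finset.mem_univ i₁)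
    have hcrest : ∑ k ∈ Finset.univ.erase i₁, c k = (T - Δ) - c i₁ := by
      rw [Finset.sum_erase_eq_sub (Finset.mem_univ i₁)]
      have : ∑ k, c k = T - Δ := by rw [hT]; linarith [hsumc]
      rw [this]
    have hR2 : ∑ k ∈ Finset.univ.erase i₁, M1 * c k
        ≤ ∑ k ∈ Finset.univ.erase i₁, c k * (1 - P (Finset.univ \ {k})) := by
      apply Finset.sum_le_sum
      intro k hk
      rw [mul_comm]
      exact mul_le_mul_of_nonneg_left (hfk k hk) (hc0 k)
    have hR2' : M1 * ((T - Δ) - c i₁)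
        ≤ ∑ k ∈ Finset.univ.erase i₁, c k * (1 - P (Finset.univ \ {k})) := by
      calc M1 * ((T - Δ) - c i₁) = ∑ k ∈ Finset.univ.erase i₁, M1 * c k := by
            rw [← Finset.mul_sum, hcrest]
        _ ≤ _ := hR2
    have hR1 : c i₁ * M2 ≤ c i₁ * (1 - P (Finset.univ \ {i₁})) :=
      mul_le_mul_of_nonneg_left hf1 (hc0 i₁)
    have hRu : Δ * M1 ≤ Δ * (1 - P Finset.univ) :=
      mul_le_mul_of_nonneg_left hfu hΔ
    -- t i₁ ≤ T - c i₁
    have ht1 : t i₁ ≤ T - c i₁ := by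
      have h1 : c i₁ = 1 - hiA i₁ - (SL - loA i₁) := by
        simp only [hcdef, Finset.sum_erase_eq_sub (Finset.mem_univ i₁), hSL]
      have := (hx i₁).2
      simp only [htdef, hT, h1]
      linarith
    -- scalar inequality
    have hkey : M1 * t i₁ + M2 * (T - t i₁)
        ≤ c i₁ * M2 + M1 * ((T - Δ) - c i₁) + Δ * M1 := by
      nlinarith [mul_nonneg (sub_nonneg.2 hM21) (sub_nonneg.2 (le_trans ht1 (le_refl _)))]
    calc ∑ i, hi i * t i = hi i₁ * t i₁ + ∑ i ∈ Finset.univ.erase i₁, hi i * t i :=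
          hsplitL
      _ ≤ M1 * t i₁ + M2 * (T - t i₁) := by
          have : hi i₁ * t i₁ = M1 * t i₁ := by rw [hM1]
          linarith [hL2]
      _ ≤ c i₁ * M2 + M1 * ((T - Δ) - c i₁) + Δ * M1 := hkey
      _ ≤ c i₁ * (1 - P (Finset.univ \ {i₁}))
            + ∑ k ∈ Finset.univ.erase i₁, c k * (1 - P (Finset.univ \ {k}))
            + Δ * (1 - P Finset.univ) := by linarith [hR1, hR2', hRu]
      _ = (∑ k, c k * (1 - P (Finset.univ \ {k}))) + Δ * (1 - P Finset.univ) := by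
          rw [hsplitR]
  -- assemble
  have hyx : ∑ i, y i * x i ≤ ∑ i, hi i * x i := by
    apply Finset.sum_le_sum
    intro i _
    exact mul_le_mul_of_nonneg_right (hy i).2 (le_trans (hbdA i).1 (hx i).1)
  have hPsing : ∀ i, P {i} = 1 - hi i := fun i => by simp [hPdef]
  have hQ1 : ∑ i, loA i * P {i} = SL - ∑ i, loA i * hi i := by
    rw [Finset.sum_congr rfl fun i _ => by rw [hPsing i]]
    simp [mul_sub, Finset.sum_sub_distrib, hSL]
  have hsplit2 : ∑ i, hi i * x i = ∑ i, loA i * hi i + ∑ i, hi i * (x i - loA i) := by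
    rw [← Finset.sum_add_distrib]
    congr 1; ext i; ring
  have h1 : ∑ k, c k * (1 - P (Finset.univ \ {k}))
      = (∑ k, c k) - ∑ k, c k * P (Finset.univ \ {k}) := by
    simp [mul_sub, Finset.sum_sub_distrib]
  have hfin : ∑ i, hi i * x i
      ≤ 1 - ((∑ i, loA i * P {i})
        + (∑ k, c k * P (Finset.univ \ {k})) + Δ * P Finset.univ) := by
    rw [hsplit2, hQ1]
    have := core
    rw [h1] at this
    have hc' : ∑ k, c k = 1 - SL - Δ := by linarith [hsumc]
    rw [hc'] at this
    linarith
  calc ∑ i, y i * x i ≤ ∑ i, hi i * x i := hyx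
    _ ≤ _ := hfin
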